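/- Let χ, a, b, λ, μ > 0 (no relation between b and Nμχ/4 is assumed). Let u, v : ℝ^N × (0,∞) → ℝ be a classical solution of (KS) on ℝ^N × (0,∞) (u is C¹ in t and C² in x, both equations hold pointwise) such that in addition v is three times continuously differentiable in x, ∇v is continuously differentiable in t, and ∂_t ∇v = ∇ ∂_t v on ℝ^N × (0,∞). Set w(x,t) = u(x,t) + (χ/(2μ)) |∇v(x,t)|². Then for all x ∈ ℝ^N and t > 0: ∂_t w(x,t) ≤ Δw(x,t) − (χλ/μ) |∇v(x,t)|² − (b − Nμχ/4) u(x,t)² + a u(x,t). -/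

import Mathlib

open Real Filter MeasureTheory RealInnerProductSpace

noncomputable section

/-- Euclidean space `ℝ^N`. -/
abbrev Eu (N : ℕ) := EuclideanSpace ℝ (Fin N)

/-- First-order partial derivative in the `i`-th coordinate direction. -/
def pd {N : ℕ} (f : Eu N → ℝ) (i : Fin N) (x : Eu N) : ℝ :=
  fderiv ℝ f x (EuclideanSpace.single i 1)

/-- Second-order partial derivative `∂_{x_i x_j}`. -/
def pd2 {N : ℕ} (f : Eu N → ℝ) (i j : Fin N) (x : Eu N) : ℝ :=
  pd (fun y => pd f j y) i x

/-- Laplacian `Δf = Σ_i ∂²f/∂x_i²`. -/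
def lap {N : ℕ} (f : Eu N → ℝ) (x : Eu N) : ℝ := ∑ i, pd2 f i i x

/-- Divergence `∇·F = Σ_i ∂F_i/∂x_i` of a vector field. -/
def divg {N : ℕ} (F : Eu N → Eu N) (x : Eu N) : ℝ :=
  ∑ i, fderiv ℝ (fun y => F y i) x (EuclideanSpace.single i 1)

/-- `(u,v)` is a global classical solution of (KS) with initial data `(u₀,v₀)`:
continuous on `ℝ^N × [0,∞)`, once continuously differentiable in `t` and twice in `x`
for `t > 0`, satisfying both equations pointwise for `t > 0`. -/
structure IsClassicalSolution {N : ℕ} (χ a b lam mu : ℝ)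
    (u v : Eu N → ℝ → ℝ) (u₀ v₀ : Eu N → ℝ) : Prop where
  contu : ContinuousOn (fun p : Eu N × ℝ => u p.1 p.2) {p : Eu N × ℝ | 0 ≤ p.2}
  contv : ContinuousOn (fun p : Eu N × ℝ => v p.1 p.2) {p : Eu N × ℝ | 0 ≤ p.2}
  regu : ∀ t : ℝ, 0 < t → ContDiff ℝ 2 (fun x => u x t)
  regv : ∀ t : ℝ, 0 < t → ContDiff ℝ 2 (fun x => v x t)
  pdeu : ∀ (x : Eu N) (t : ℝ), 0 < t →
    HasDerivAt (fun s => u x s)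
      (lap (fun y => u y t) x
        - χ * divg (fun y => u y t • gradient (fun z => v z t) y) x
        + u x t * (a - b * u x t)) t
  pdev : ∀ (x : Eu N) (t : ℝ), 0 < t →
    HasDerivAt (fun s => v x s)
      (lap (fun y => v y t) x - lam * v x t + mu * u x t) t
  initu : ∀ x, u x 0 = u₀ x
  initv : ∀ x, v x 0 = v₀ x

/-- A solution is bounded on `ℝ^N × [0,∞)`. -/
def BoundedSol {N : ℕ} (u v : Eu N → ℝ → ℝ) : Prop :=
  ∃ C : ℝ, ∀ (x : Eu N) (t : ℝ), 0 ≤ t → |u x t| ≤ C ∧ |v x t| ≤ C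

/-- A solution is nonnegative. -/
def NonnegSol {N : ℕ} (u v : Eu N → ℝ → ℝ) : Prop :=
  ∀ (x : Eu N) (t : ℝ), 0 ≤ t → 0 ≤ u x t ∧ 0 ≤ v x t

/-- Membership in `X₁⁺`: bounded, uniformly continuous and nonnegative. -/
def MemX1plus {N : ℕ} (f : Eu N → ℝ) : Prop :=
  UniformContinuous f ∧ (∃ C, ∀ x, |f x| ≤ C) ∧ ∀ x, 0 ≤ f x

/-- Membership in `X₂⁺`: in `X₁⁺`, differentiable, and all first-order partial
derivatives are bounded and uniformly continuous. -/
def MemX2plus {N : ℕ} (f : Eu N → ℝ) : Prop :=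
  MemX1plus f ∧ Differentiable ℝ f ∧
    ∀ i : Fin N, UniformContinuous (fun x => pd f i x) ∧ ∃ C, ∀ x, |pd f i x| ≤ C


section Aux
variable {N : ℕ}

lemma grad_apply (f : Eu N → ℝ) (x : Eu N) (i : Fin N) : gradient f x i = pd f i x := by
  have h : ⟪gradient f x, EuclideanSpace.single i 1⟫ = fderiv ℝ f x (EuclideanSpace.single i 1) :=
    InnerProductSpace.toDual_symm_apply
  rw [EuclideanSpace.inner_single_right] at h
  rw [pd, ← h]
  simp

lemma norm_sq_eq (g : Eu N) : ‖g‖^2 = ∑ i, (g i)^2 := by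
  rw [EuclideanSpace.norm_sq_eq]
  simp [Real.norm_eq_abs, sq_abs]

lemma inner_eq (g h : Eu N) : ⟪g, h⟫ = ∑ i, g i * h i := by
  simp [PiLp.inner_apply, RCLike.inner_apply]
  exact Finset.sum_congr rfl fun i _ => mul_comm _ _

lemma contDiff_pd {m : ℕ} {f : Eu N → ℝ} (hf : ContDiff ℝ (m+1) f) (i : Fin N) :
    ContDiff ℝ m (fun y => pd f i y) := by
  have h1 : ContDiff ℝ m (fderiv ℝ f) := hf.fderiv_right (le_refl _)
  exact (ContinuousLinearMap.apply ℝ ℝ (EuclideanSpace.single i 1)).contDiff.comp h1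

lemma hasFDerivAt_pd {f : Eu N → ℝ} (hf : ContDiff ℝ 2 f) (w : Eu N) (x : Eu N) :
    HasFDerivAt (fun y => fderiv ℝ f y w)
      ((ContinuousLinearMap.apply ℝ ℝ w).comp (fderiv ℝ (fderiv ℝ f) x)) x := by
  have h1 : ContDiff ℝ 1 (fderiv ℝ f) := hf.fderiv_right (by norm_num)
  exact (ContinuousLinearMap.apply ℝ ℝ w).hasFDerivAt.comp x
    (h1.differentiable (by norm_num) x).hasFDerivAt

lemma pd2_eq {f : Eu N → ℝ} (hf : ContDiff ℝ 2 f) (i j : Fin N) (x : Eu N) :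
    pd2 f i j x = fderiv ℝ (fderiv ℝ f) x (EuclideanSpace.single i 1)
      (EuclideanSpace.single j 1) := by
  have := (hasFDerivAt_pd hf (EuclideanSpace.single j 1) x).fderiv
  simp only [pd2, pd]
  rw [this]
  rfl

lemma pd2_symm {f : Eu N → ℝ} (hf : ContDiff ℝ 2 f) (i j : Fin N) (x : Eu N) :
    pd2 f i j x = pd2 f j i x := by
  rw [pd2_eq hf, pd2_eq hf]
  have hd : ∀ y, HasFDerivAt f (fderiv ℝ f y) y := fun y =>
    ((hf.differentiable (by norm_num)) y).hasFDerivAt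
  have h1 : ContDiff ℝ 1 (fderiv ℝ f) := hf.fderiv_right (by norm_num)
  exact second_derivative_symmetric hd ((h1.differentiable (by norm_num) x).hasFDerivAt) _ _

lemma pd_add {f g : Eu N → ℝ} {x : Eu N} (hf : DifferentiableAt ℝ f x)
    (hg : DifferentiableAt ℝ g x) (i : Fin N) :
    pd (fun y => f y + g y) i x = pd f i x + pd g i x := by
  simp [pd, fderiv_fun_add hf hg]

lemma pd_sub {f g : Eu N → ℝ} {x : Eu N} (hf : DifferentiableAt ℝ f x)
    (hg : DifferentiableAt ℝ g x) (i : Fin N) :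
    pd (fun y => f y - g y) i x = pd f i x - pd g i x := by
  simp [pd, fderiv_fun_sub hf hg]

lemma pd_const_mul {f : Eu N → ℝ} {x : Eu N} (hf : DifferentiableAt ℝ f x) (c : ℝ) (i : Fin N) :
    pd (fun y => c * f y) i x = c * pd f i x := by
  simp [pd, fderiv_const_mul hf]

lemma pd_mul {f g : Eu N → ℝ} {x : Eu N} (hf : DifferentiableAt ℝ f x)
    (hg : DifferentiableAt ℝ g x) (i : Fin N) :
    pd (fun y => f y * g y) i x = f x * pd g i x + g x * pd f i x := by
  simp [pd, fderiv_fun_mul hf hg]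

lemma pd_sum {ι : Type*} (s : Finset ι) {f : ι → Eu N → ℝ} {x : Eu N}
    (hf : ∀ k ∈ s, DifferentiableAt ℝ (f k) x) (i : Fin N) :
    pd (fun y => ∑ k ∈ s, f k y) i x = ∑ k ∈ s, pd (f k) i x := by
  simp [pd, fderiv_fun_sum hf]

lemma contDiff_pd2 {V : Eu N → ℝ} (hV : ContDiff ℝ 3 V) (i j : Fin N) :
    ContDiff ℝ 1 (fun y => pd2 V i j y) := by
  have h1 : ContDiff ℝ 2 (fun y => pd V j y) :=
    contDiff_pd (m := 2) (by exact_mod_cast hV) j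
  exact contDiff_pd (m := 1) (by exact_mod_cast h1) i

lemma pd_lap {V : Eu N → ℝ} (hV : ContDiff ℝ 3 V) (j : Fin N) (x : Eu N) :
    pd (fun y => lap V y) j x = ∑ i, pd (fun y => pd2 V i j y) i x := by
  have hV2 : ContDiff ℝ 2 V := hV.of_le (by norm_num)
  have hVi : ∀ i : Fin N, ContDiff ℝ 2 (fun y => pd V i y) :=
    fun i => contDiff_pd (m := 2) (by exact_mod_cast hV) i
  have h1 : pd (fun y => lap V y) j x = ∑ i, pd (fun y => pd2 V i i y) j x := by
    simp only [lap]
    exact pd_sum Finset.univ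
      (fun k _ => ((contDiff_pd2 hV k k).differentiable (by norm_num)).differentiableAt) j
  rw [h1]
  refine Finset.sum_congr rfl fun i _ => ?_
  have e1 : pd (fun y => pd2 V i i y) j x = pd2 (fun y => pd V i y) j i x := rfl
  have e2 : pd2 (fun y => pd V i y) j i x = pd2 (fun y => pd V i y) i j x :=
    pd2_symm (hVi i) j i x
  have e3 : (fun y => pd (fun z => pd V i z) j y) = fun y => pd2 V i j y := by
    funext y
    exact (pd2_symm hV2 j i y).symm ▸ rfl
  rw [e1, e2]
  show pd (fun y => pd (fun z => pd V i z) j y) i x = _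
  rw [e3]

lemma divg_eq {u₀ : Eu N → ℝ} {V : Eu N → ℝ} (hu : ContDiff ℝ 2 u₀) (hV : ContDiff ℝ 3 V)
    (x : Eu N) :
    divg (fun y => u₀ y • gradient V y) x
      = (∑ i, pd u₀ i x * pd V i x) + u₀ x * lap V x := by
  have hV2 : ContDiff ℝ 2 V := hV.of_le (by norm_num)
  have key : ∀ i : Fin N,
      fderiv ℝ (fun y => (u₀ y • gradient V y : Eu N) i) x (EuclideanSpace.single i 1)
        = u₀ x * pd2 V i i x + pd V i x * pd u₀ i x := by
    intro i
    have e : (fun y => (u₀ y • gradient V y : Eu N) i) = fun y => u₀ y * pd V i y := by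
      funext y
      simp [grad_apply]
    rw [e]
    show pd (fun y => u₀ y * pd V i y) i x = _
    rw [pd_mul ((hu.differentiable (by norm_num)).differentiableAt)
      (((contDiff_pd (m := 2) (by exact_mod_cast hV) i).differentiable
        (by norm_num)).differentiableAt) i]
    rfl
  simp only [divg]
  rw [Finset.sum_congr rfl fun i _ => key i, lap]
  rw [Finset.sum_add_distrib, ← Finset.mul_sum]
  simp [mul_comm]
  ring

lemma lap_w {u₀ V : Eu N → ℝ} (hu : ContDiff ℝ 2 u₀) (hV : ContDiff ℝ 3 V) (c : ℝ) (x : Eu N) :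
    lap (fun y => u₀ y + c * ‖gradient V y‖^2) x
      = lap u₀ x + c * ∑ i, ∑ j,
          (2 * ((pd2 V i j x)^2 + pd V j x * pd (fun y => pd2 V i j y) i x)) := by
  have hV2 : ContDiff ℝ 2 V := hV.of_le (by norm_num)
  have hVj : ∀ j : Fin N, ContDiff ℝ 2 (fun y => pd V j y) :=
    fun j => contDiff_pd (m := 2) (by exact_mod_cast hV) j
  have hdVj : ∀ (j : Fin N) (y : Eu N), DifferentiableAt ℝ (fun z => pd V j z) y :=
    fun j y => ((hVj j).differentiable (by norm_num)).differentiableAt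
  have hdu : ∀ y, DifferentiableAt ℝ u₀ y :=
    fun y => ((hu.differentiable (by norm_num))).differentiableAt
  have hd2 : ∀ (i j : Fin N) (y : Eu N), DifferentiableAt ℝ (fun z => pd2 V i j z) y :=
    fun i j y => ((contDiff_pd2 hV i j).differentiable (by norm_num)).differentiableAt
  have ew : (fun y => u₀ y + c * ‖gradient V y‖^2)
      = fun y => u₀ y + c * ∑ j, (pd V j y)^2 := by
    funext y
    rw [norm_sq_eq]
    congr 1
    congr 1
    exact Finset.sum_congr rfl fun j _ => by rw [grad_apply]
  rw [ew]
  have hsumd : ∀ y, DifferentiableAt ℝ (fun z => ∑ j, (pd V j z)^2) y := by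
    intro y
    exact DifferentiableAt.fun_sum fun j _ => (hdVj j y).pow 2
  have step1 : ∀ (i : Fin N) (y : Eu N),
      pd (fun z => u₀ z + c * ∑ j, (pd V j z)^2) i y
        = pd u₀ i y + c * ∑ j, 2 * pd V j y * pd2 V i j y := by
    intro i y
    rw [pd_add (hdu y) ((hsumd y).const_mul c) i, pd_const_mul (hsumd y) c i,
      pd_sum Finset.univ (fun j _ => by
        have : (fun z : Eu N => (pd V j z)^2) = fun z => pd V j z * pd V j z := by
          funext z; ring
        rw [this]; exact (hdVj j y).mul (hdVj j y)) i]
    congr 2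
    refine Finset.sum_congr rfl fun j _ => ?_
    have e : (fun z : Eu N => (pd V j z)^2) = fun z => pd V j z * pd V j z := by
      funext z; ring
    rw [e, pd_mul (hdVj j y) (hdVj j y) i]
    show pd V j y * pd2 V i j y + pd V j y * pd2 V i j y = _
    ring
  have step2 : ∀ i : Fin N,
      pd2 (fun z => u₀ z + c * ∑ j, (pd V j z)^2) i i x
        = pd2 u₀ i i x + c * ∑ j,
            2 * ((pd2 V i j x)^2 + pd V j x * pd (fun y => pd2 V i j y) i x) := by
    intro i
    have efun : (fun y => pd (fun z => u₀ z + c * ∑ j, (pd V j z)^2) i y)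
        = fun y => pd u₀ i y + c * ∑ j, 2 * pd V j y * pd2 V i j y := by
      funext y; exact step1 i y
    show pd _ i x = _
    rw [efun]
    have hdpu : DifferentiableAt ℝ (fun y => pd u₀ i y) x :=
      ((contDiff_pd (m := 1) (by exact_mod_cast hu) i).differentiable (by norm_num)).differentiableAt
    have hterm : ∀ (j : Fin N), DifferentiableAt ℝ
        (fun y => 2 * pd V j y * pd2 V i j y) x :=
      fun j => (((hdVj j x).const_mul 2).mul (hd2 i j x))
    have hsum2 : DifferentiableAt ℝ (fun y => ∑ j, 2 * pd V j y * pd2 V i j y) x :=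
      DifferentiableAt.fun_sum fun j _ => hterm j
    rw [pd_add hdpu (hsum2.const_mul c) i, pd_const_mul hsum2 c i,
      pd_sum Finset.univ (fun j _ => hterm j) i]
    congr 2
    refine Finset.sum_congr rfl fun j _ => ?_
    have e2 : (fun y => 2 * pd V j y * pd2 V i j y)
        = fun y => (fun z => 2 * pd V j z) y * (fun z => pd2 V i j z) y := rfl
    rw [e2, pd_mul ((hdVj j x).const_mul 2) (hd2 i j x) i,
      pd_const_mul (hdVj j x) 2 i]
    show 2 * pd V j x * pd (fun y => pd2 V i j y) i x
        + pd2 V i j x * (2 * pd2 V i j x) = _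
    ring
  simp only [lap]
  rw [Finset.sum_congr rfl fun i _ => step2 i, Finset.sum_add_distrib, ← Finset.mul_sum]

end Aux

set_option maxHeartbeats 1000000

/-- without any relation between `b` and `Nμχ/4`, the quantity
`w = u + (χ/(2μ))|∇v|²` satisfies
`w_t ≤ Δw − (χλ/μ)|∇v|² − (b − Nμχ/4)u² + a u`. -/
theorem statement14 (N : ℕ) (hN : 1 ≤ N) (χ a b lam mu : ℝ)
    (hχ : 0 < χ) (ha : 0 < a) (hb : 0 < b) (hlam : 0 < lam) (hmu : 0 < mu)
    (u v : Eu N → ℝ → ℝ)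
    (hru : ∀ t : ℝ, 0 < t → ContDiff ℝ 2 (fun x => u x t))
    (hrv : ∀ t : ℝ, 0 < t → ContDiff ℝ 3 (fun x => v x t))
    (hpdeu : ∀ (x : Eu N) (t : ℝ), 0 < t →
      HasDerivAt (fun s => u x s)
        (lap (fun y => u y t) x
          - χ * divg (fun y => u y t • gradient (fun z => v z t) y) x
          + u x t * (a - b * u x t)) t)
    (hpdev : ∀ (x : Eu N) (t : ℝ), 0 < t →
      HasDerivAt (fun s => v x s)
        (lap (fun y => v y t) x - lam * v x t + mu * u x t) t)
    (hgv : ∀ (x : Eu N) (t : ℝ), 0 < t →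
      HasDerivAt (fun s => gradient (fun y => v y s) x)
        (gradient (fun y => deriv (fun s => v y s) t) x) t)
    (hgvc : ∀ x : Eu N, ContinuousOn
      (fun t : ℝ => gradient (fun y => deriv (fun s => v y s) t) x) (Set.Ioi 0)) :
    ∀ (x : Eu N) (t : ℝ), 0 < t →
      deriv (fun s => u x s + χ / (2 * mu) * ‖gradient (fun y => v y s) x‖ ^ 2) t ≤
        lap (fun y => u y t + χ / (2 * mu) * ‖gradient (fun z => v z t) y‖ ^ 2) x
          - χ * lam / mu * ‖gradient (fun y => v y t) x‖ ^ 2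
          - (b - N * mu * χ / 4) * u x t ^ 2 + a * u x t := by
  intro x t ht
  have hU : ContDiff ℝ 2 (fun y => u y t) := hru t ht
  have hV : ContDiff ℝ 3 (fun y => v y t) := hrv t ht
  have hV2 : ContDiff ℝ 2 (fun y => v y t) := hV.of_le (by norm_num)
  have hUd : ∀ y, DifferentiableAt ℝ (fun z => u z t) y :=
    fun y => (hU.differentiable (by norm_num)).differentiableAt
  have hVd : ∀ y, DifferentiableAt ℝ (fun z => v z t) y :=
    fun y => (hV.differentiable (by norm_num)).differentiableAt
  have hlapVd : ∀ y, DifferentiableAt ℝ (fun z => lap (fun w => v w t) z) y := fun y => by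
    simp only [lap]
    exact DifferentiableAt.fun_sum fun k _ =>
      ((contDiff_pd2 hV k k).differentiable (by norm_num)).differentiableAt
  -- Step A: compute the time derivative
  have hnorm : HasDerivAt (fun s => ‖gradient (fun y => v y s) x‖^2)
      (2 * ⟪gradient (fun y => v y t) x,
        gradient (fun y => deriv (fun s => v y s) t) x⟫) t := by
    have h1 := (hgv x t ht).inner ℝ (hgv x t ht)
    have e : (fun s => ‖gradient (fun y => v y s) x‖^2)
        = fun s => ⟪gradient (fun y => v y s) x, gradient (fun y => v y s) x⟫ := by
      funext s; rw [real_inner_self_eq_norm_sq]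
    rw [e]
    refine h1.congr_deriv ?_
    rw [real_inner_comm (gradient (fun y => v y t) x)]
    ring
  have hder := (hpdeu x t ht).add (hnorm.const_mul (χ / (2 * mu)))
  have hderiv : deriv (fun s => u x s + χ / (2 * mu) * ‖gradient (fun y => v y s) x‖ ^ 2) t
      = (lap (fun y => u y t) x
          - χ * divg (fun y => u y t • gradient (fun z => v z t) y) x
          + u x t * (a - b * u x t))
        + χ / (2 * mu) * (2 * ⟪gradient (fun y => v y t) x,
            gradient (fun y => deriv (fun s => v y s) t) x⟫) := hder.deriv
  rw [hderiv]
  -- identify the time derivative of v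
  have eW : (fun y => deriv (fun s => v y s) t)
      = (fun y => lap (fun z => v z t) y - lam * v y t + mu * u y t) := by
    funext y; exact (hpdev y t ht).deriv
  rw [eW]
  -- inner product in coordinates
  have einner : ⟪gradient (fun y => v y t) x,
      gradient (fun y => lap (fun z => v z t) y - lam * v y t + mu * u y t) x⟫
      = ∑ i, pd (fun y => v y t) i x *
          (pd (fun y => lap (fun z => v z t) y) i x
            - lam * pd (fun y => v y t) i x + mu * pd (fun y => u y t) i x) := by
    rw [inner_eq]
    refine Finset.sum_congr rfl fun i _ => ?_
    rw [grad_apply, grad_apply]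
    congr 1
    have e1 : (fun y => lap (fun z => v z t) y - lam * v y t + mu * u y t)
        = fun y => (fun z => lap (fun w => v w t) z - lam * v z t) y
            + (fun z => mu * u z t) y := rfl
    rw [e1, pd_add (f := fun z => lap (fun w => v w t) z - lam * v z t)
      (g := fun z => mu * u z t) ((hlapVd x).sub ((hVd x).const_mul lam)) ((hUd x).const_mul mu) i]
    have e2 : (fun z => lap (fun w => v w t) z - lam * v z t)
        = fun z => (fun y => lap (fun w => v w t) y) z - (fun y => lam * v y t) z := rfl
    rw [e2, pd_sub (hlapVd x) ((hVd x).const_mul lam) i,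
      pd_const_mul (hVd x) lam i, pd_const_mul (hUd x) mu i]
  rw [einner]
  -- divergence in coordinates
  have ediv : divg (fun y => u y t • gradient (fun z => v z t) y) x
      = (∑ i, pd (fun y => u y t) i x * pd (fun y => v y t) i x)
        + u x t * lap (fun y => v y t) x := divg_eq hU hV x
  rw [ediv]
  -- Laplacian of w (Bochner expansion)
  have elap : lap (fun y => u y t + χ / (2 * mu) * ‖gradient (fun z => v z t) y‖ ^ 2) x
      = lap (fun y => u y t) x + χ / (2 * mu) * ∑ i, ∑ j,
          (2 * ((pd2 (fun y => v y t) i j x)^2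
            + pd (fun y => v y t) j x
              * pd (fun y => pd2 (fun z => v z t) i j y) i x)) := lap_w hU hV _ x
  rw [elap]
  -- rewrite the norm of the gradient
  have enorm : ‖gradient (fun y => v y t) x‖ ^ 2 = ∑ i, (pd (fun y => v y t) i x)^2 := by
    rw [norm_sq_eq]
    exact Finset.sum_congr rfl fun i _ => by rw [grad_apply]
  rw [enorm]
  -- reorganize the Bochner double sum
  have esum : ∑ i, ∑ j, (2 * ((pd2 (fun y => v y t) i j x)^2
        + pd (fun y => v y t) j x * pd (fun y => pd2 (fun z => v z t) i j y) i x))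
      = 2 * (∑ i, ∑ j, (pd2 (fun y => v y t) i j x)^2)
        + 2 * ∑ j, pd (fun y => v y t) j x
            * pd (fun y => lap (fun z => v z t) y) j x := by
    have e1 : ∀ i : Fin N, ∑ j, (2 * ((pd2 (fun y => v y t) i j x)^2
          + pd (fun y => v y t) j x * pd (fun y => pd2 (fun z => v z t) i j y) i x))
        = (∑ j, 2 * (pd2 (fun y => v y t) i j x)^2)
          + ∑ j, 2 * (pd (fun y => v y t) j x
              * pd (fun y => pd2 (fun z => v z t) i j y) i x) := by
      intro i
      rw [← Finset.sum_add_distrib]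
      exact Finset.sum_congr rfl fun j _ => by ring
    rw [Finset.sum_congr rfl fun i _ => e1 i, Finset.sum_add_distrib]
    congr 1
    · rw [Finset.mul_sum]
      exact Finset.sum_congr rfl fun i _ => by rw [Finset.mul_sum]
    · rw [Finset.sum_comm, Finset.mul_sum]
      refine Finset.sum_congr rfl fun j _ => ?_
      rw [pd_lap hV j x, Finset.mul_sum, Finset.mul_sum]
  rw [esum]
  -- expand the inner-product sum
  have eexp : ∑ i, pd (fun y => v y t) i x *
        (pd (fun y => lap (fun z => v z t) y) i x
          - lam * pd (fun y => v y t) i x + mu * pd (fun y => u y t) i x)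
      = (∑ i, pd (fun y => v y t) i x * pd (fun y => lap (fun z => v z t) y) i x)
        - lam * (∑ i, (pd (fun y => v y t) i x)^2)
        + mu * (∑ i, pd (fun y => u y t) i x * pd (fun y => v y t) i x) := by
    rw [Finset.mul_sum, Finset.mul_sum, ← Finset.sum_sub_distrib, ← Finset.sum_add_distrib]
    exact Finset.sum_congr rfl fun i _ => by ring
  rw [eexp]
  -- abbreviate everything
  set L := lap (fun y => u y t) x with hL
  set S := lap (fun y => v y t) x with hS
  set U0 := u x t with hU0
  set Q := ∑ i, ∑ j, (pd2 (fun y => v y t) i j x)^2 with hQ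
  set PP := ∑ i, (pd (fun y => v y t) i x)^2 with hPP
  set PQ := ∑ i, pd (fun y => u y t) i x * pd (fun y => v y t) i x with hPQ
  set PT := ∑ i, pd (fun y => v y t) i x * pd (fun y => lap (fun z => v z t) y) i x with hPT
  clear_value L S U0 Q PP PQ PT
  -- key quadratic facts
  have hdiag : ∑ i, (pd2 (fun y => v y t) i i x)^2 ≤ Q := by
    rw [hQ]
    refine Finset.sum_le_sum fun i _ => ?_
    exact Finset.single_le_sum (f := fun j => (pd2 (fun y => v y t) i j x)^2)
      (fun j _ => sq_nonneg _) (Finset.mem_univ i)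
  have hS2 : S^2 ≤ (N : ℝ) * ∑ i, (pd2 (fun y => v y t) i i x)^2 := by
    rw [hS]
    simp only [lap]
    have := sq_sum_le_card_mul_sum_sq
      (s := (Finset.univ : Finset (Fin N))) (f := fun i => pd2 (fun y => v y t) i i x)
    simpa using this
  have hN1 : (1 : ℝ) ≤ (N : ℝ) := by exact_mod_cast hN
  have hkey : 0 ≤ χ / mu * Q + N * mu * χ / 4 * U0^2 + χ * U0 * S := by
    have hNpos : (0 : ℝ) < N := lt_of_lt_of_le one_pos hN1
    have hQS : S^2 ≤ (N : ℝ) * Q := le_trans hS2 (by nlinarith [hdiag])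
    have hinner : 0 ≤ Q + N * mu^2 * U0^2 / 4 + mu * U0 * S := by
      nlinarith [sq_nonneg (S + N * mu * U0 / 2), hQS, hNpos, sq_nonneg U0, hmu.le]
    have : χ / mu * Q + N * mu * χ / 4 * U0^2 + χ * U0 * S
        = χ / mu * (Q + N * mu^2 * U0^2 / 4 + mu * U0 * S) := by
      field_simp
    rw [this]
    exact mul_nonneg (div_nonneg hχ.le hmu.le) hinner
  -- final algebra
  rw [← sub_nonneg]
  have efin : (L + χ / (2 * mu) * (2 * Q + 2 * PT) - χ * lam / mu * PP
        - (b - ↑N * mu * χ / 4) * U0 ^ 2 + a * U0)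
      - (L - χ * (PQ + U0 * S) + U0 * (a - b * U0)
        + χ / (2 * mu) * (2 * (PT - lam * PP + mu * PQ)))
      = χ / mu * Q + N * mu * χ / 4 * U0^2 + χ * U0 * S := by
    field_simp
    ring
  rw [efin]
  exact hkey
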